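/- For every τ in the complex upper half-plane ℍ, the functions x₆ and y₆ satisfy y₆(τ)⁴ − x₆(τ)³ − 4·x₆(τ) = 0; explicitly, (θ₂(8τ)/θ₂(32τ))⁴ = (2θ₃(32τ)/θ₂(32τ))³ + 4·(2θ₃(32τ)/θ₂(32τ)). -/

import Mathlib

open Complex Filter Topology

/-- Jacobi theta function θ₂(τ) = ∑_{n∈ℤ} exp(πiτ(n+1/2)²). -/
noncomputable def θ₂ (τ : ℂ) : ℂ :=
  ∑' n : ℤ, Complex.exp (Real.pi * Complex.I * τ * ((n : ℂ) + 1/2)^2)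

/-- Jacobi theta function θ₃(τ) = ∑_{n∈ℤ} exp(πiτn²). -/
noncomputable def θ₃ (τ : ℂ) : ℂ :=
  ∑' n : ℤ, Complex.exp (Real.pi * Complex.I * τ * (n : ℂ)^2)

/-- x_n(τ) = 2θ₃(2^{n-1}τ)/θ₂(2^{n-1}τ). -/
noncomputable def xfun (n : ℕ) (τ : ℂ) : ℂ :=
  2 * θ₃ (2^(n-1) * τ) / θ₂ (2^(n-1) * τ)

/-- y_n(τ) = θ₂(8τ)/θ₂(2^{n-1}τ). -/
noncomputable def yfun (n : ℕ) (τ : ℂ) : ℂ :=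
  θ₂ (8 * τ) / θ₂ (2^(n-1) * τ)

noncomputable def tht (c : ℝ) (σ : ℂ) (n : ℤ) : ℂ :=
  Complex.exp (Real.pi * Complex.I * σ * ((n : ℂ) + c)^2)

noncomputable def th (c : ℝ) (σ : ℂ) : ℂ := ∑' n : ℤ, tht c σ n

lemma θ₂_eq_th (σ : ℂ) : θ₂ σ = th (1/2) σ := by
  refine tsum_congr fun n => ?_
  simp only [tht]
  norm_num

lemma θ₃_eq_th (σ : ℂ) : θ₃ σ = th 0 σ := by
  refine tsum_congr fun n => ?_
  simp only [tht]
  norm_num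

lemma th_term_eq (c : ℝ) (σ : ℂ) (n : ℤ) :
    tht c σ n = Complex.exp (Real.pi * Complex.I * σ * (c:ℂ)^2)
      * jacobiTheta₂_term n ((c:ℂ) * σ) σ := by
  rw [tht, jacobiTheta₂_term, ← Complex.exp_add]
  congr 1
  ring

lemma summable_norm_th (c : ℝ) {σ : ℂ} (hσ : 0 < σ.im) :
    Summable fun n : ℤ => ‖tht c σ n‖ := by
  have hjtt : Summable fun n : ℤ => ‖jacobiTheta₂_term n ((c:ℂ) * σ) σ‖ := by
    have hb := summable_pow_mul_jacobiTheta₂_term_bound |((c:ℂ) * σ).im| hσ 0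
    refine hb.of_nonneg_of_le (fun n => norm_nonneg _) (fun n => ?_)
    simpa using norm_jacobiTheta₂_term_le hσ (le_refl |((c:ℂ) * σ).im|) le_rfl n
  have := hjtt.mul_left ‖Complex.exp (Real.pi * Complex.I * σ * (c:ℂ)^2)‖
  refine this.congr fun n => ?_
  rw [← norm_mul, ← th_term_eq]

noncomputable def eEven : ℤ × ℤ ≃ {p : ℤ × ℤ // Even (p.1 + p.2)} :=
  Equiv.ofBijective (fun kl => ⟨(kl.1 + kl.2, kl.1 - kl.2), by rw [Int.even_iff]; omega⟩)
    ⟨fun a b h => by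
      simp only [Subtype.mk.injEq, Prod.mk.injEq] at h
      rcases a with ⟨a1, a2⟩; rcases b with ⟨b1, b2⟩
      simp_all only [Prod.mk.injEq]
      omega,
     fun p => by
      obtain ⟨⟨m, n⟩, h⟩ := p
      rw [Int.even_iff] at h
      exact ⟨(((m + n) / 2 : ℤ), m - (m + n) / 2),
        Subtype.ext (by simp only [Prod.mk.injEq]; omega)⟩⟩

noncomputable def eOdd1 : ℤ × ℤ ≃ {p : ℤ × ℤ // ¬ Even (p.1 + p.2)} :=
  Equiv.ofBijective (fun kl => ⟨(kl.1 + kl.2, kl.1 - kl.2 - 1), by rw [Int.even_iff]; omega⟩)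
    ⟨fun a b h => by
      simp only [Subtype.mk.injEq, Prod.mk.injEq] at h
      rcases a with ⟨a1, a2⟩; rcases b with ⟨b1, b2⟩
      simp_all only [Prod.mk.injEq]
      omega,
     fun p => by
      obtain ⟨⟨m, n⟩, h⟩ := p
      rw [Int.even_iff] at h
      exact ⟨(((m + n + 1) / 2 : ℤ), m - (m + n + 1) / 2),
        Subtype.ext (by simp only [Prod.mk.injEq]; omega)⟩⟩

noncomputable def eOdd2 : ℤ × ℤ ≃ {p : ℤ × ℤ // ¬ Even (p.1 + p.2)} :=
  Equiv.ofBijective (fun kl => ⟨(kl.1 + kl.2 + 1, kl.1 - kl.2), by rw [Int.even_iff]; omega⟩)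
    ⟨fun a b h => by
      simp only [Subtype.mk.injEq, Prod.mk.injEq] at h
      rcases a with ⟨a1, a2⟩; rcases b with ⟨b1, b2⟩
      simp_all only [Prod.mk.injEq]
      omega,
     fun p => by
      obtain ⟨⟨m, n⟩, h⟩ := p
      rw [Int.even_iff] at h
      exact ⟨(((m + n - 1) / 2 : ℤ), m - 1 - (m + n - 1) / 2),
        Subtype.ext (by simp only [Prod.mk.injEq]; omega)⟩⟩

lemma tsum_prod_th (a b : ℝ) {σ : ℂ} (hσ : 0 < σ.im) :
    (∑' p : ℤ × ℤ, tht a σ p.1 * tht b σ p.2) = th a σ * th b σ :=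
  (tsum_mul_tsum_of_summable_norm (summable_norm_th a hσ) (summable_norm_th b hσ)).symm

lemma im_two_mul (τ : ℂ) : (2 * τ).im = 2 * τ.im := by simp

lemma sq1 {τ : ℂ} (hτ : 0 < τ.im) :
    th (1/2) τ ^ 2 = 2 * th (1/2) (2*τ) * th 0 (2*τ) := by
  have h2 : 0 < (2*τ).im := by rw [im_two_mul]; linarith
  have hn := summable_norm_th (1/2) hτ
  have hglob : Summable (fun p : ℤ × ℤ => tht (1/2) τ p.1 * tht (1/2) τ p.2) :=
    summable_mul_of_summable_norm hn hn
  have step1 : th (1/2) τ ^ 2 = ∑' p : ℤ × ℤ, tht (1/2) τ p.1 * tht (1/2) τ p.2 := by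
    rw [sq]
    exact tsum_mul_tsum_of_summable_norm hn hn
  have step2 : (∑' p : ℤ × ℤ, tht (1/2) τ p.1 * tht (1/2) τ p.2)
      = (∑' p : {p : ℤ × ℤ // Even (p.1 + p.2)}, tht (1/2) τ (↑p : ℤ × ℤ).1 * tht (1/2) τ (↑p : ℤ × ℤ).2)
        + ∑' p : {p : ℤ × ℤ // ¬ Even (p.1 + p.2)}, tht (1/2) τ (↑p : ℤ × ℤ).1 * tht (1/2) τ (↑p : ℤ × ℤ).2 :=
    (Summable.tsum_add_tsum_compl (hglob.subtype _) (hglob.subtype _)).symm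
  have hEven : (∑' p : {p : ℤ × ℤ // Even (p.1 + p.2)},
      tht (1/2) τ (↑p : ℤ × ℤ).1 * tht (1/2) τ (↑p : ℤ × ℤ).2) = th (1/2) (2*τ) * th 0 (2*τ) := by
    rw [← eEven.tsum_eq (f := fun p : {p : ℤ × ℤ // Even (p.1 + p.2)} =>
      tht (1/2) τ (↑p : ℤ × ℤ).1 * tht (1/2) τ (↑p : ℤ × ℤ).2)]
    rw [tsum_congr (fun kl : ℤ × ℤ => ?_)]
    · exact tsum_prod_th (1/2) 0 h2
    · show tht (1/2) τ (kl.1 + kl.2) * tht (1/2) τ (kl.1 - kl.2)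
        = tht (1/2) (2*τ) kl.1 * tht 0 (2*τ) kl.2
      simp only [tht]
      rw [← Complex.exp_add, ← Complex.exp_add]
      congr 1
      push_cast
      ring
  have hOdd : (∑' p : {p : ℤ × ℤ // ¬ Even (p.1 + p.2)},
      tht (1/2) τ (↑p : ℤ × ℤ).1 * tht (1/2) τ (↑p : ℤ × ℤ).2) = th 0 (2*τ) * th (1/2) (2*τ) := by
    rw [← eOdd1.tsum_eq (f := fun p : {p : ℤ × ℤ // ¬ Even (p.1 + p.2)} =>
      tht (1/2) τ (↑p : ℤ × ℤ).1 * tht (1/2) τ (↑p : ℤ × ℤ).2)]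
    rw [tsum_congr (fun kl : ℤ × ℤ => ?_)]
    · exact tsum_prod_th 0 (1/2) h2
    · show tht (1/2) τ (kl.1 + kl.2) * tht (1/2) τ (kl.1 - kl.2 - 1)
        = tht 0 (2*τ) kl.1 * tht (1/2) (2*τ) kl.2
      simp only [tht]
      rw [← Complex.exp_add, ← Complex.exp_add]
      congr 1
      push_cast
      ring
  rw [step1, step2, hEven, hOdd]
  ring

lemma sq2 {τ : ℂ} (hτ : 0 < τ.im) :
    th 0 τ ^ 2 = th 0 (2*τ) ^ 2 + th (1/2) (2*τ) ^ 2 := by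
  have h2 : 0 < (2*τ).im := by rw [im_two_mul]; linarith
  have hn := summable_norm_th 0 hτ
  have hglob : Summable (fun p : ℤ × ℤ => tht 0 τ p.1 * tht 0 τ p.2) :=
    summable_mul_of_summable_norm hn hn
  have step1 : th 0 τ ^ 2 = ∑' p : ℤ × ℤ, tht 0 τ p.1 * tht 0 τ p.2 := by
    rw [sq]
    exact tsum_mul_tsum_of_summable_norm hn hn
  have step2 : (∑' p : ℤ × ℤ, tht 0 τ p.1 * tht 0 τ p.2)
      = (∑' p : {p : ℤ × ℤ // Even (p.1 + p.2)}, tht 0 τ (↑p : ℤ × ℤ).1 * tht 0 τ (↑p : ℤ × ℤ).2)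
        + ∑' p : {p : ℤ × ℤ // ¬ Even (p.1 + p.2)}, tht 0 τ (↑p : ℤ × ℤ).1 * tht 0 τ (↑p : ℤ × ℤ).2 :=
    (Summable.tsum_add_tsum_compl (hglob.subtype _) (hglob.subtype _)).symm
  have hEven : (∑' p : {p : ℤ × ℤ // Even (p.1 + p.2)},
      tht 0 τ (↑p : ℤ × ℤ).1 * tht 0 τ (↑p : ℤ × ℤ).2) = th 0 (2*τ) * th 0 (2*τ) := by
    rw [← eEven.tsum_eq (f := fun p : {p : ℤ × ℤ // Even (p.1 + p.2)} =>
      tht 0 τ (↑p : ℤ × ℤ).1 * tht 0 τ (↑p : ℤ × ℤ).2)]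
    rw [tsum_congr (fun kl : ℤ × ℤ => ?_)]
    · exact tsum_prod_th 0 0 h2
    · show tht 0 τ (kl.1 + kl.2) * tht 0 τ (kl.1 - kl.2)
        = tht 0 (2*τ) kl.1 * tht 0 (2*τ) kl.2
      simp only [tht]
      rw [← Complex.exp_add, ← Complex.exp_add]
      congr 1
      push_cast
      ring
  have hOdd : (∑' p : {p : ℤ × ℤ // ¬ Even (p.1 + p.2)},
      tht 0 τ (↑p : ℤ × ℤ).1 * tht 0 τ (↑p : ℤ × ℤ).2) = th (1/2) (2*τ) * th (1/2) (2*τ) := by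
    rw [← eOdd2.tsum_eq (f := fun p : {p : ℤ × ℤ // ¬ Even (p.1 + p.2)} =>
      tht 0 τ (↑p : ℤ × ℤ).1 * tht 0 τ (↑p : ℤ × ℤ).2)]
    rw [tsum_congr (fun kl : ℤ × ℤ => ?_)]
    · exact tsum_prod_th (1/2) (1/2) h2
    · show tht 0 τ (kl.1 + kl.2 + 1) * tht 0 τ (kl.1 - kl.2)
        = tht (1/2) (2*τ) kl.1 * tht (1/2) (2*τ) kl.2
      simp only [tht]
      rw [← Complex.exp_add, ← Complex.exp_add]
      congr 1
      push_cast
      ring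
  rw [step1, step2, hEven, hOdd]
  ring

lemma θ₂_sq {σ : ℂ} (hσ : 0 < σ.im) : θ₂ σ ^ 2 = 2 * θ₂ (2*σ) * θ₃ (2*σ) := by
  rw [θ₂_eq_th, θ₂_eq_th, θ₃_eq_th]
  exact sq1 hσ

lemma θ₃_sq {σ : ℂ} (hσ : 0 < σ.im) : θ₃ σ ^ 2 = θ₃ (2*σ) ^ 2 + θ₂ (2*σ) ^ 2 := by
  rw [θ₃_eq_th, θ₃_eq_th, θ₂_eq_th]
  exact sq2 hσ

lemma key_identity {τ : ℂ} (hτ : 0 < τ.im) :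
    θ₂ (8*τ) ^ 4 = 8 * θ₂ (32*τ) * θ₃ (32*τ) * (θ₃ (32*τ) ^ 2 + θ₂ (32*τ) ^ 2) := by
  have h8 : 0 < (8*τ).im := by simp [Complex.mul_im]; linarith
  have h16 : 0 < (16*τ).im := by simp [Complex.mul_im]; linarith
  have h1 := θ₂_sq h8
  have h2 := θ₂_sq h16
  have h3 := θ₃_sq h16
  rw [show (2:ℂ) * (8*τ) = 16*τ by ring] at h1
  rw [show (2:ℂ) * (16*τ) = 32*τ by ring] at h2 h3
  linear_combination (θ₂ (8*τ)^2 + 2 * θ₂ (16*τ) * θ₃ (16*τ)) * h1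
    + 4 * θ₃ (16*τ)^2 * h2 + 8 * θ₂ (32*τ) * θ₃ (32*τ) * h3

theorem X0_64_equation (τ : ℂ) (hτ : 0 < τ.im) :
    yfun 6 τ ^ 4 - xfun 6 τ ^ 3 - 4 * xfun 6 τ = 0 ∧
    (θ₂ (8 * τ) / θ₂ (32 * τ)) ^ 4 =
      (2 * θ₃ (32 * τ) / θ₂ (32 * τ)) ^ 3 + 4 * (2 * θ₃ (32 * τ) / θ₂ (32 * τ)) := by
  have key := key_identity hτ
  have h2nd : (θ₂ (8 * τ) / θ₂ (32 * τ)) ^ 4 =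
      (2 * θ₃ (32 * τ) / θ₂ (32 * τ)) ^ 3 + 4 * (2 * θ₃ (32 * τ) / θ₂ (32 * τ)) := by
    by_cases hc : θ₂ (32 * τ) = 0
    · simp [hc]
    · generalize θ₂ (32 * τ) = a at hc key ⊢
      generalize θ₃ (32 * τ) = b at key ⊢
      field_simp
      linear_combination key
  refine ⟨?_, h2nd⟩
  have hx : xfun 6 τ = 2 * θ₃ (32 * τ) / θ₂ (32 * τ) := by
    rw [xfun]
    norm_num
  have hy : yfun 6 τ = θ₂ (8 * τ) / θ₂ (32 * τ) := by
    rw [yfun]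
    norm_num
  rw [hx, hy]
  linear_combination h2nd
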